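/- For any ρ > 0 and t > 0, ∫_ρ^{2ρ} exp(-u²/(4t²))/√(cosh u - cosh ρ) du ≤ 2·exp(-ρ²/(4t²)). -/

import Mathlib

open Real MeasureTheory

lemma aux_cosh_sub_cosh (u ρ : ℝ) :
    Real.cosh u - Real.cosh ρ = 2 * Real.sinh ((u + ρ) / 2) * Real.sinh ((u - ρ) / 2) := by
  have h1 : u = (u + ρ) / 2 + (u - ρ) / 2 := by ring
  have h2 : ρ = (u + ρ) / 2 - (u - ρ) / 2 := by ring
  rw [show Real.cosh u = Real.cosh ((u + ρ) / 2 + (u - ρ) / 2) by rw [← h1],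
      show Real.cosh ρ = Real.cosh ((u + ρ) / 2 - (u - ρ) / 2) by rw [← h2],
      Real.cosh_add, Real.cosh_sub]
  ring

lemma aux_self_le_sinh {x : ℝ} (hx : 0 ≤ x) : x ≤ Real.sinh x := by
  rcases eq_or_lt_of_le hx with h | h
  · simp [← h]
  · exact (Real.self_lt_sinh_iff.2 h).le

lemma aux_key (ρ u : ℝ) (hρ : 0 < ρ) (hu : ρ ≤ u) :
    (u - ρ) * ρ ≤ Real.cosh u - Real.cosh ρ := by
  rw [aux_cosh_sub_cosh]
  have h1 : (u + ρ) / 2 ≤ Real.sinh ((u + ρ) / 2) := aux_self_le_sinh (by linarith)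
  have h2 : (u - ρ) / 2 ≤ Real.sinh ((u - ρ) / 2) := aux_self_le_sinh (by linarith)
  have hs2 : 0 ≤ Real.sinh ((u - ρ) / 2) := le_trans (by linarith) h2
  nlinarith [h1, h2, hs2]

lemma aux_eq (C ρ u : ℝ) (hρ : 0 < ρ) (hu : ρ ≤ u) :
    C / Real.sqrt ((u - ρ) * ρ) = C / Real.sqrt ρ * (u - ρ) ^ (-(1:ℝ)/2) := by
  have hur : (0:ℝ) ≤ u - ρ := by linarith
  rw [Real.sqrt_mul hur, show -(1:ℝ)/2 = -(1/2 : ℝ) by norm_num, Real.rpow_neg hur,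
    ← Real.sqrt_eq_rpow, div_mul_eq_div_div_swap, div_eq_mul_inv (C / Real.sqrt ρ)]

theorem kernel_integral_near_bound (ρ t : ℝ) (hρ : 0 < ρ) (ht : 0 < t) :
    (∫ u in ρ..2 * ρ,
        Real.exp (-u ^ 2 / (4 * t ^ 2)) / Real.sqrt (Real.cosh u - Real.cosh ρ)) ≤
      2 * Real.exp (-ρ ^ 2 / (4 * t ^ 2)) := by
  set C := Real.exp (-ρ ^ 2 / (4 * t ^ 2)) with hC
  have hCpos : 0 < C := Real.exp_pos _
  have hle : ρ ≤ 2 * ρ := by linarith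
  set f : ℝ → ℝ := fun u =>
    Real.exp (-u ^ 2 / (4 * t ^ 2)) / Real.sqrt (Real.cosh u - Real.cosh ρ) with hf
  set g : ℝ → ℝ := fun u => C / Real.sqrt ρ * (u - ρ) ^ (-(1:ℝ)/2) with hg
  -- pointwise bound on [ρ, 2ρ]
  have hbound : ∀ u ∈ Set.Icc ρ (2 * ρ), f u ≤ g u := by
    intro u hu
    obtain ⟨hu1, hu2⟩ := hu
    have hnum : Real.exp (-u ^ 2 / (4 * t ^ 2)) ≤ C := by
      apply Real.exp_le_exp.2
      have h4 : 0 < 4 * t ^ 2 := by positivity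
      rw [div_le_div_iff₀ h4 h4]
      have hsq : ρ ^ 2 ≤ u ^ 2 := by nlinarith
      nlinarith [hsq, sq_nonneg t]
    have step : f u ≤ C / Real.sqrt ((u - ρ) * ρ) := by
      rcases eq_or_lt_of_le hu1 with h | h
      · simp [hf, ← h]
      · have hpos : 0 < (u - ρ) * ρ := by nlinarith
        have hsq : Real.sqrt ((u - ρ) * ρ) ≤ Real.sqrt (Real.cosh u - Real.cosh ρ) :=
          Real.sqrt_le_sqrt (aux_key ρ u hρ hu1)
        exact div_le_div₀ hCpos.le hnum (Real.sqrt_pos.2 hpos) hsq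
    rw [aux_eq C ρ u hρ hu1] at step
    exact step
  -- integrability of g
  have hgint : IntervalIntegrable g volume ρ (2 * ρ) := by
    apply IntervalIntegrable.const_mul
    have := (intervalIntegral.intervalIntegrable_rpow' (a := 0) (b := ρ)
      (show (-1:ℝ) < -(1:ℝ)/2 by norm_num)).comp_sub_right ρ
    rw [show (2:ℝ) * ρ = ρ + ρ by ring]
    simpa using this
  -- integrability of f
  have hfint : IntervalIntegrable f volume ρ (2 * ρ) := by
    apply hgint.mono_fun'
    · apply Measurable.aestronglyMeasurable
      exact Measurable.div (by fun_prop) (Real.continuous_sqrt.measurable.comp (by fun_prop))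
    · rw [Filter.EventuallyLE, ae_restrict_iff' measurableSet_uIoc]
      filter_upwards with u hu
      rw [Set.uIoc_of_le hle] at hu
      have hfu : 0 ≤ f u := by
        apply div_nonneg (Real.exp_pos _).le (Real.sqrt_nonneg _)
      rw [Real.norm_eq_abs, abs_of_nonneg hfu]
      exact hbound u ⟨hu.1.le, hu.2⟩
  calc (∫ u in ρ..2 * ρ, f u) ≤ ∫ u in ρ..2 * ρ, g u :=
        intervalIntegral.integral_mono_on hle hfint hgint hbound
    _ = 2 * C := by
        rw [hg, intervalIntegral.integral_const_mul]
        have h1 : (∫ u in ρ..2 * ρ, (u - ρ) ^ (-(1:ℝ)/2)) = ∫ x in (0:ℝ)..ρ, x ^ (-(1:ℝ)/2) := by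
          rw [intervalIntegral.integral_comp_sub_right (fun x => x ^ (-(1:ℝ)/2)) ρ,
            sub_self, show 2 * ρ - ρ = ρ by ring]
        rw [h1, integral_rpow (Or.inl (by norm_num))]
        have h0 : (0:ℝ) ^ (-(1:ℝ)/2 + 1) = 0 := by
          rw [Real.zero_rpow (by norm_num)]
        rw [h0, show -(1:ℝ)/2 + 1 = 1/2 by norm_num, sub_zero, ← Real.sqrt_eq_rpow]
        have hs : Real.sqrt ρ ≠ 0 := ne_of_gt (Real.sqrt_pos.2 hρ)
        field_simp
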